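/- For the Young function Q(u) = u log^r(1+u) with integer r ≥ 1, and the normalized indicator g = 1_E/(2γ)^r where E ⊂ T^d has measure proportional to γ^r, one has ∫ Q(|g|) ≲ γ^r Q(1/(2γ)^r); consequently for γ = γ_n = π/(6(2^{2n}+1/2)) the Luxemburg norm satisfies ‖1_{[0,γ_n]^r × T^{d−r}}/(2γ_n)^r‖_{L_Q(T^d)} ≲ Q(2^{2nr})/2^{2nr} whenever Q(2^{2nr}) ≳ 2^{2nr}. -/

import Mathlib

set_option maxHeartbeats 1000000

noncomputable section
open MeasureTheory Real Filter Set

/-- The cube T^d = [-π, π)^d. -/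
def box (d : ℕ) : Set (Fin d → ℝ) := Set.univ.pi fun _ => Set.Ico (-Real.pi) Real.pi

/-- Luxemburg norm of f in L_Q(T^d). -/
def luxNorm (d : ℕ) (Q : ℝ → ℝ) (f : (Fin d → ℝ) → ℝ) : ℝ :=
  sInf {k : ℝ | 0 < k ∧ (∫ x in box d, Q (|f x| / k)) ≤ 1}

def gam (n : ℕ) : ℝ := Real.pi / (6 * ((2 : ℝ) ^ (2 * n) + 1 / 2))

/-- The normalized indicator 1_{[0,γ]^r × T^{d−r}} / (2γ)^r. -/
def testFun (d r : ℕ) (γ : ℝ) : (Fin d → ℝ) → ℝ :=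
  ({x | ∀ i : Fin d, (i : ℕ) < r → x i ∈ Set.Icc 0 γ}).indicator
    fun _ => 1 / (2 * γ) ^ r

def Sset (d r : ℕ) (γ : ℝ) : Set (Fin d → ℝ) :=
  {x | ∀ i : Fin d, (i : ℕ) < r → x i ∈ Set.Icc 0 γ}

lemma one_le_pow_aux {a : ℝ} (h : 1 ≤ a) (n : ℕ) : 1 ≤ a ^ n := by
  induction n with
  | zero => simp
  | succ m ih => rw [pow_succ]; nlinarith

lemma testFun_def (d r : ℕ) (γ : ℝ) :
    testFun d r γ = (Sset d r γ).indicator (fun _ => 1 / (2 * γ) ^ r) := rfl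

lemma Sset_eq_pi (d r : ℕ) (γ : ℝ) :
    Sset d r γ
      = Set.pi Set.univ (fun i : Fin d => if (i : ℕ) < r then Set.Icc 0 γ else Set.univ) := by
  ext x
  simp only [Sset, Set.mem_setOf_eq, Set.mem_pi, Set.mem_univ, true_implies]
  constructor
  · intro h i
    by_cases hi : (i : ℕ) < r
    · simpa [hi] using h i hi
    · simp [hi]
  · intro h i hi
    simpa [hi] using h i

lemma measurableSet_Sset (d r : ℕ) (γ : ℝ) : MeasurableSet (Sset d r γ) := by
  rw [Sset_eq_pi]
  exact MeasurableSet.univ_pi fun i => by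
    split
    · exact measurableSet_Icc
    · exact MeasurableSet.univ

lemma card_filter_lt (d r : ℕ) (h : r ≤ d) :
    (Finset.univ.filter (fun i : Fin d => (i : ℕ) < r)).card = r := by
  have h1 : ((Finset.univ : Finset (Fin d)).map Fin.valEmbedding).filter (· < r)
      = (Finset.univ.filter (fun i : Fin d => (i : ℕ) < r)).map Fin.valEmbedding := by
    rw [Finset.filter_map]; rfl
  have h2 : ((Finset.univ : Finset (Fin d)).map Fin.valEmbedding).filter (· < r)
      = Finset.Iio r := by
    rw [Fin.map_valEmbedding_univ]; ext m; simp; omega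
  have := congrArg Finset.card h1
  rw [h2, Finset.card_map, Nat.card_Iio] at this
  omega

lemma vol_toReal_le (d r : ℕ) (γ : ℝ) (hγ : 0 ≤ γ) (hπ : γ ≤ Real.pi) (hrd : r ≤ d) :
    (volume (box d ∩ Sset d r γ)).toReal ≤ γ ^ r * (2 * Real.pi) ^ (d - r) := by
  set T : Set (Fin d → ℝ) :=
    Set.pi Set.univ (fun i : Fin d =>
      if (i : ℕ) < r then Set.Icc 0 γ else Set.Ico (-Real.pi) Real.pi) with hT
  have hsub : box d ∩ Sset d r γ ⊆ T := by
    rintro x ⟨hxb, hxs⟩ i _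
    by_cases hi : (i : ℕ) < r
    · simpa [hi] using hxs i hi
    · simpa [hi] using hxb i (Set.mem_univ i)
  have h2π : (0:ℝ) ≤ 2 * Real.pi := by positivity
  have hvolT : volume T = ENNReal.ofReal (γ ^ r * (2 * Real.pi) ^ (d - r)) := by
    rw [hT, volume_pi_pi]
    have : ∀ i : Fin d,
        volume (if (i : ℕ) < r then Set.Icc 0 γ else Set.Ico (-Real.pi) Real.pi)
          = if (i : ℕ) < r then ENNReal.ofReal γ else ENNReal.ofReal (2 * Real.pi) := by
      intro i
      split
      · rw [Real.volume_Icc]; norm_num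
      · rw [Real.volume_Ico]; ring_nf
    rw [Finset.prod_congr rfl fun i _ => this i, Finset.prod_ite, Finset.prod_const,
      Finset.prod_const, card_filter_lt d r hrd]
    have hcard : (Finset.univ.filter (fun i : Fin d => ¬ (i : ℕ) < r)).card = d - r := by
      have := Finset.card_filter_add_card_filter_not
        (s := (Finset.univ : Finset (Fin d))) (p := fun i : Fin d => (i : ℕ) < r)
      rw [card_filter_lt d r hrd, Finset.card_univ, Fintype.card_fin] at this
      omega
    rw [hcard, ← ENNReal.ofReal_pow hγ, ← ENNReal.ofReal_pow h2π, ← ENNReal.ofReal_mul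
      (by positivity)]
  have hle : volume (box d ∩ Sset d r γ) ≤ ENNReal.ofReal (γ ^ r * (2 * Real.pi) ^ (d - r)) := by
    rw [← hvolT]; exact measure_mono hsub
  calc (volume (box d ∩ Sset d r γ)).toReal
      ≤ (ENNReal.ofReal (γ ^ r * (2 * Real.pi) ^ (d - r))).toReal :=
        ENNReal.toReal_mono (by simp) hle
    _ = γ ^ r * (2 * Real.pi) ^ (d - r) := ENNReal.toReal_ofReal (by positivity)

lemma integral_key (d r : ℕ) (γ k : ℝ) (hγ : 0 < γ) (hπ : γ ≤ Real.pi) (hrd : r ≤ d)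
    (hk : 0 < k) :
    (∫ x in box d, (|testFun d r γ x| / k) * Real.log (1 + |testFun d r γ x| / k) ^ r)
      ≤ (1 / (2 * γ) ^ r / k) * Real.log (1 + 1 / (2 * γ) ^ r / k) ^ r
          * (γ ^ r * (2 * Real.pi) ^ (d - r)) := by
  set c : ℝ := 1 / (2 * γ) ^ r with hc
  have hc0 : 0 ≤ c := by positivity
  set v : ℝ := (c / k) * Real.log (1 + c / k) ^ r with hv
  have hv0 : 0 ≤ v := by
    refine mul_nonneg (div_nonneg hc0 hk.le) (pow_nonneg (Real.log_nonneg ?_) r)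
    exact le_add_of_nonneg_right (div_nonneg hc0 hk.le)
  have hfun : ∀ x, (|testFun d r γ x| / k) * Real.log (1 + |testFun d r γ x| / k) ^ r
      = (Sset d r γ).indicator (fun _ => v) x := by
    intro x
    by_cases hx : x ∈ Sset d r γ
    · rw [Set.indicator_of_mem hx]
      have h1 : testFun d r γ x = c := by rw [testFun_def, Set.indicator_of_mem hx]
      rw [h1, abs_of_nonneg hc0]
    · rw [Set.indicator_of_notMem hx]
      have h1 : testFun d r γ x = 0 := by rw [testFun_def, Set.indicator_of_notMem hx]
      rw [h1]; simp
  rw [integral_congr_ae (Filter.Eventually.of_forall hfun),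
    MeasureTheory.setIntegral_indicator (measurableSet_Sset d r γ),
    setIntegral_const, smul_eq_mul]
  calc (volume (box d ∩ Sset d r γ)).toReal * v
      ≤ (γ ^ r * (2 * Real.pi) ^ (d - r)) * v :=
        mul_le_mul_of_nonneg_right (vol_toReal_le d r γ hγ.le hπ hrd) hv0
    _ = v * (γ ^ r * (2 * Real.pi) ^ (d - r)) := by ring

theorem orlicz_norm_of_test_function
    (d r : ℕ) (hr : 1 ≤ r) (hrd : r ≤ d) :
    (∃ C > 0, ∀ γ : ℝ, 0 < γ → γ ≤ Real.pi →
      (∫ x in box d, |testFun d r γ x| * Real.log (1 + |testFun d r γ x|) ^ r) ≤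
        C * γ ^ r * ((1 / (2 * γ) ^ r) * Real.log (1 + 1 / (2 * γ) ^ r) ^ r)) ∧
    (∃ C > 0, ∀ n : ℕ, 1 ≤ n →
      (2 : ℝ) ^ (2 * n * r) ≤
          (2 : ℝ) ^ (2 * n * r) * Real.log (1 + (2 : ℝ) ^ (2 * n * r)) ^ r →
      luxNorm d (fun u => u * Real.log (1 + u) ^ r) (testFun d r (gam n)) ≤
        C * ((2 : ℝ) ^ (2 * n * r) * Real.log (1 + (2 : ℝ) ^ (2 * n * r)) ^ r) /
          (2 : ℝ) ^ (2 * n * r)) := by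
  have h2π1 : (1:ℝ) ≤ 2 * Real.pi := by nlinarith [Real.pi_gt_three]
  have hWle : (2 * Real.pi) ^ (d - r) ≤ (2 * Real.pi) ^ d :=
    pow_le_pow_right₀ h2π1 (Nat.sub_le d r)
  constructor
  · refine ⟨(2 * Real.pi) ^ d, by positivity, fun γ hγ hπ => ?_⟩
    have key := integral_key d r γ 1 hγ hπ hrd one_pos
    simp only [div_one] at key
    set c : ℝ := 1 / (2 * γ) ^ r with hc
    have hc0 : 0 ≤ c := by positivity
    have hP0 : 0 ≤ c * Real.log (1 + c) ^ r :=
      mul_nonneg hc0 (pow_nonneg (Real.log_nonneg (by linarith)) r)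
    calc (∫ x in box d, |testFun d r γ x| * Real.log (1 + |testFun d r γ x|) ^ r)
        ≤ c * Real.log (1 + c) ^ r * (γ ^ r * (2 * Real.pi) ^ (d - r)) := key
      _ = (c * Real.log (1 + c) ^ r * γ ^ r) * (2 * Real.pi) ^ (d - r) := by ring
      _ ≤ (c * Real.log (1 + c) ^ r * γ ^ r) * (2 * Real.pi) ^ d := by
          apply mul_le_mul_of_nonneg_left hWle
          exact mul_nonneg hP0 (by positivity)
      _ = (2 * Real.pi) ^ d * γ ^ r * (c * Real.log (1 + c) ^ r) := by ring
  · set A : ℝ := 1 + r * Real.log (3 / 2) with hA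
    have hlog32 : 0 ≤ Real.log (3 / 2) := Real.log_nonneg (by norm_num)
    have hA1 : (1:ℝ) ≤ A := by
      have h0 : (0:ℝ) ≤ r * Real.log (3 / 2) := mul_nonneg (by positivity) hlog32
      rw [hA]
      exact le_add_of_nonneg_right h0
    set C : ℝ := (2 * Real.pi) ^ d * A ^ r with hC
    have hC1 : (1:ℝ) ≤ C := by
      have h1 : (1:ℝ) ≤ (2 * Real.pi) ^ d := one_le_pow_aux h2π1 d
      have h2 : (1:ℝ) ≤ A ^ r := one_le_pow_aux hA1 r
      calc (1:ℝ) = 1 * 1 := by ring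
        _ ≤ (2 * Real.pi) ^ d * A ^ r := mul_le_mul h1 h2 zero_le_one (by positivity)
    have hC0 : (0:ℝ) < C := lt_of_lt_of_le one_pos hC1
    refine ⟨C, hC0, fun n hn _ => ?_⟩
    set M : ℝ := (2:ℝ) ^ (2 * n) with hM
    have hM4 : (4:ℝ) ≤ M := by
      rw [hM]
      calc (4:ℝ) = 2 ^ 2 := by norm_num
        _ ≤ 2 ^ (2 * n) := pow_le_pow_right₀ one_le_two (by omega)
    set N : ℝ := (2:ℝ) ^ (2 * n * r) with hN
    have hNM : N = M ^ r := by rw [hN, hM, pow_mul]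
    have hN4 : (4:ℝ) ≤ N := by
      rw [hNM]
      calc (4:ℝ) ≤ M := hM4
        _ = M ^ 1 := (pow_one M).symm
        _ ≤ M ^ r := pow_le_pow_right₀ (by linarith) hr
    have hN0 : (0:ℝ) < N := by linarith
    set L : ℝ := Real.log (1 + N) with hL
    have hL1 : (1:ℝ) ≤ L := by
      rw [hL, Real.le_log_iff_exp_le (by linarith)]
      have := Real.exp_one_lt_d9
      linarith
    have hL0 : (0:ℝ) ≤ L := by linarith
    -- gamma facts
    have hγ0 : 0 < gam n := by
      rw [gam]; positivity
    have hγπ : gam n ≤ Real.pi := by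
      rw [gam]
      apply div_le_self Real.pi_pos.le
      nlinarith [hM4]
    set γ : ℝ := gam n with hγ
    set c : ℝ := 1 / (2 * γ) ^ r with hc
    have hc0 : 0 ≤ c := by positivity
    -- c ≤ (3/2)^r * N
    have hinv : 1 / (2 * γ) = 3 * (M + 1 / 2) / Real.pi := by
      have hden : (0:ℝ) < 6 * ((2:ℝ) ^ (2 * n) + 1 / 2) := by positivity
      rw [hγ, gam, hM]
      rw [div_eq_div_iff (by positivity) (ne_of_gt Real.pi_pos)]
      field_simp
      ring
    have hinvle : 1 / (2 * γ) ≤ (3 / 2) * M := by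
      rw [hinv, div_le_iff₀ Real.pi_pos]
      nlinarith [Real.pi_gt_three, hM4]
    have hcle : c ≤ (3 / 2) ^ r * N := by
      rw [hc, hNM, ← one_div_pow, ← mul_pow]
      exact pow_le_pow_left₀ (div_nonneg zero_le_one (by linarith)) hinvle r
    -- the candidate k
    set k : ℝ := C * L ^ r with hk
    have hLr1 : (1:ℝ) ≤ L ^ r := one_le_pow_aux hL1 r
    have hk1 : (1:ℝ) ≤ k := by
      calc (1:ℝ) = 1 * 1 := by ring
        _ ≤ C * L ^ r := mul_le_mul hC1 hLr1 zero_le_one hC0.le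
    have hk0 : (0:ℝ) < k := lt_of_lt_of_le one_pos hk1
    -- log bound
    have h32r1 : (1:ℝ) ≤ (3/2:ℝ) ^ r := one_le_pow_aux (by norm_num) r
    have hck : c / k ≤ c := div_le_self hc0 hk1
    have harg : 1 + c / k ≤ (3/2:ℝ) ^ r * (1 + N) := by
      have : c / k ≤ (3/2:ℝ) ^ r * N := le_trans hck hcle
      nlinarith
    have hlogle : Real.log (1 + c / k) ≤ A * L := by
      have h1 : Real.log (1 + c / k) ≤ Real.log ((3/2:ℝ) ^ r * (1 + N)) :=
        Real.log_le_log (by have := div_nonneg hc0 hk0.le; linarith) harg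
      have h2 : Real.log ((3/2:ℝ) ^ r * (1 + N)) = r * Real.log (3/2) + L := by
        rw [Real.log_mul (by positivity) (ne_of_gt (by linarith)), Real.log_pow, ← hL]
      have h3 : r * Real.log (3/2) + L ≤ A * L := by
        rw [hA]
        have : r * Real.log (3/2) * 1 ≤ r * Real.log (3/2) * L :=
          mul_le_mul_of_nonneg_left hL1 (mul_nonneg (by positivity) hlog32)
        nlinarith
      linarith [h1, h2.le, h3]
    have hlogpow : Real.log (1 + c / k) ^ r ≤ A ^ r * L ^ r := by
      rw [← mul_pow]
      refine pow_le_pow_left₀ (Real.log_nonneg ?_) hlogle r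
      have := div_nonneg hc0 hk0.le; linarith
    -- c * γ^r = (1/2)^r
    have hcγ : c * γ ^ r = (1/2:ℝ) ^ r := by
      rw [hc, mul_pow]
      field_simp
      rw [← mul_pow]; norm_num
    -- main integral bound
    have hQ : (∫ x in box d, (|testFun d r γ x| / k)
        * Real.log (1 + |testFun d r γ x| / k) ^ r) ≤ 1 := by
      refine le_trans (integral_key d r γ k hγ0 hγπ hrd hk0) ?_
      have heq : (c / k) * Real.log (1 + c / k) ^ r * (γ ^ r * (2 * Real.pi) ^ (d - r))
          = (c * Real.log (1 + c / k) ^ r * (γ ^ r * (2 * Real.pi) ^ (d - r))) / k := by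
        ring
      rw [heq, div_le_one hk0]
      calc c * Real.log (1 + c / k) ^ r * (γ ^ r * (2 * Real.pi) ^ (d - r))
          = (c * γ ^ r) * (2 * Real.pi) ^ (d - r) * Real.log (1 + c / k) ^ r := by ring
        _ ≤ (c * γ ^ r) * (2 * Real.pi) ^ (d - r) * (A ^ r * L ^ r) := by
            apply mul_le_mul_of_nonneg_left hlogpow
            have hγr : (0:ℝ) ≤ γ ^ r := pow_nonneg hγ0.le r
            have hW : (0:ℝ) ≤ (2 * Real.pi) ^ (d - r) := pow_nonneg (by positivity) _
            exact mul_nonneg (mul_nonneg hc0 hγr) hW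
        _ = (1/2:ℝ) ^ r * (2 * Real.pi) ^ (d - r) * (A ^ r * L ^ r) := by rw [hcγ]
        _ ≤ 1 * (2 * Real.pi) ^ d * (A ^ r * L ^ r) := by
            have hALr : (0:ℝ) ≤ A ^ r * L ^ r :=
              mul_nonneg (pow_nonneg (by linarith) r) (pow_nonneg hL0 r)
            apply mul_le_mul_of_nonneg_right _ hALr
            apply mul_le_mul (pow_le_one₀ (by norm_num) (by norm_num)) hWle
              (pow_nonneg (by positivity) _) zero_le_one
        _ = k := by rw [hk, hC]; ring
    -- membership and csInf
    have hmem : k ∈ {k : ℝ | 0 < k ∧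
        (∫ x in box d, (fun u => u * Real.log (1 + u) ^ r) (|testFun d r γ x| / k)) ≤ 1} :=
      ⟨hk0, hQ⟩
    have hbdd : BddBelow {k : ℝ | 0 < k ∧
        (∫ x in box d, (fun u => u * Real.log (1 + u) ^ r) (|testFun d r γ x| / k)) ≤ 1} :=
      ⟨0, fun x hx => hx.1.le⟩
    have hlux : luxNorm d (fun u => u * Real.log (1 + u) ^ r) (testFun d r γ) ≤ k :=
      csInf_le hbdd hmem
    have hfin : C * (N * L ^ r) / N = k := by
      rw [hk]; field_simp
    rw [hfin]
    exact hlux
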